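/- arXiv:1508.04533 — 4 statements merged into one kernel-verified Lean document; each statement's English description precedes it below -/
import Mathlib

section
/- Given constants λ₁*, λ₂* > 0 and b₁, b₂ ∈ ℝ, set Λ = λ₁* + λ₂*, B = (λ₂*·b₁ + λ₁*·b₂)/Λ, A₁ = λ₁*·(b₁ − b₂)/Λ², A₂ = λ₂*·(b₂ − b₁)/Λ², and define H₁(t) = B·t + A₁·(1 − e^{−Λt}), H₂(t) = B·t + A₂·(1 − e^{−Λt}) for t ≥ 0. Then (H₁, H₂) solves the Volterra system of integral equations H₁(t) = (b₁/λ₁*)·(1 − e^{−λ₁* t}) + ∫₀ᵗ H₂(t−u)·λ₁*·e^{−λ₁* u} du and H₂(t) = (b₂/λ₂*)·(1 − e^{−λ₂* t}) + ∫₀ᵗ H₁(t−u)·λ₂*·e^{−λ₂* u} du for all t ≥ 0. -/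
set_option maxHeartbeats 1000000

open MeasureTheory intervalIntegral

-- ∫ exp(c + k u)
lemma int_exp_lin (k c a b : ℝ) (hk : k ≠ 0) :
    ∫ u in a..b, Real.exp (c + k*u) = (Real.exp (c + k*b) - Real.exp (c + k*a))/k := by
  have h : ∀ u : ℝ, HasDerivAt (fun u => Real.exp (c + k*u)/k) (Real.exp (c + k*u)) u := by
    intro u
    have h1 : HasDerivAt (fun u : ℝ => c + k*u) k u := by
      simpa using ((hasDerivAt_id u).const_mul k).const_add c
    have := (h1.exp).div_const k
    simpa [mul_div_assoc, mul_comm, mul_div_cancel_left₀, hk] using this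
  rw [intervalIntegral.integral_eq_sub_of_hasDerivAt (fun u _ => h u)]
  · ring
  · exact (Real.continuous_exp.comp (by continuity)).intervalIntegrable a b

lemma int_mul_exp (k a b : ℝ) (hk : k ≠ 0) :
    ∫ u in a..b, u * Real.exp (k*u)
      = (b/k - 1/k^2) * Real.exp (k*b) - (a/k - 1/k^2) * Real.exp (k*a) := by
  have h : ∀ u : ℝ, HasDerivAt (fun u => (u/k - 1/k^2) * Real.exp (k*u)) (u * Real.exp (k*u)) u := by
    intro u
    have h1 : HasDerivAt (fun u : ℝ => k*u) k u := by
      simpa using (hasDerivAt_id u).const_mul k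
    have h2 : HasDerivAt (fun u : ℝ => u/k - 1/k^2) (1/k) u := by
      exact ((hasDerivAt_id u).div_const k).sub_const (1/k^2)
    have : HasDerivAt (fun u => (u/k - 1/k^2) * Real.exp (k*u))
        (1 / k * Real.exp (k * u) + (u / k - 1 / k ^ 2) * (Real.exp (k * u) * k)) u := h2.mul h1.exp
    convert this using 1
    have hkk : k * k⁻¹ = 1 := mul_inv_cancel₀ hk
    linear_combination (Real.exp (k*u) / k - u * Real.exp (k*u)) * hkk
  rw [intervalIntegral.integral_eq_sub_of_hasDerivAt (fun u _ => h u)]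
  exact (continuous_id.mul (Real.continuous_exp.comp (by continuity))).intervalIntegrable a b

lemma key (l1 l2 b1 b2 t : ℝ) (hl1 : 0 < l1) (hl2 : 0 < l2) :
    ((l2*b1+l1*b2)/(l1+l2)) * t + (l1*(b1-b2)/(l1+l2)^2) * (1 - Real.exp (-(l1+l2)*t))
    = (b1/l1) * (1 - Real.exp (-l1*t))
      + ∫ u in (0:ℝ)..t,
          (((l2*b1+l1*b2)/(l1+l2)) * (t-u) + (l2*(b2-b1)/(l1+l2)^2) * (1 - Real.exp (-(l1+l2)*(t-u))))
            * (l1 * Real.exp (-l1*u)) := by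
  have hΛ : l1 + l2 ≠ 0 := by positivity
  have hl1' : l1 ≠ 0 := hl1.ne'
  have hl2' : l2 ≠ 0 := hl2.ne'
  set Λ := l1 + l2 with hΛdef
  set B := (l2*b1+l1*b2)/Λ with hBdef
  set A2 := l2*(b2-b1)/Λ^2 with hA2def
  have hcong : ∀ u : ℝ, (B*(t-u) + A2*(1 - Real.exp (-Λ*(t-u)))) * (l1*Real.exp (-l1*u))
      = ((B*t + A2)*l1) * Real.exp (0 + (-l1)*u) - (B*l1) * (u*Real.exp ((-l1)*u))
        - (A2*l1) * Real.exp ((-Λ*t) + l2*u) := by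
    intro u
    have h1 : Real.exp (-Λ*(t-u)) * Real.exp (-l1*u) = Real.exp ((-Λ*t) + l2*u) := by
      rw [← Real.exp_add]; congr 1; simp only [hΛdef]; ring
    have h2 : Real.exp (0 + (-l1)*u) = Real.exp (-l1*u) := by norm_num
    rw [h2]
    linear_combination (-(A2*l1)) * h1
  rw [intervalIntegral.integral_congr (fun u _ => hcong u)]
  have i1 : IntervalIntegrable (fun u => ((B*t + A2)*l1) * Real.exp (0 + (-l1)*u)) volume 0 t :=
    (continuous_const.mul (Real.continuous_exp.comp (by continuity))).intervalIntegrable 0 t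
  have i2 : IntervalIntegrable (fun u => (B*l1) * (u*Real.exp ((-l1)*u))) volume 0 t :=
    (continuous_const.mul (continuous_id.mul (Real.continuous_exp.comp (by continuity)))).intervalIntegrable 0 t
  have i3 : IntervalIntegrable (fun u => (A2*l1) * Real.exp ((-Λ*t) + l2*u)) volume 0 t :=
    (continuous_const.mul (Real.continuous_exp.comp (by continuity))).intervalIntegrable 0 t
  rw [intervalIntegral.integral_sub (i1.sub i2) i3, intervalIntegral.integral_sub i1 i2,
    intervalIntegral.integral_const_mul, intervalIntegral.integral_const_mul,
    intervalIntegral.integral_const_mul,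
    int_exp_lin (-l1) 0 0 t (neg_ne_zero.mpr hl1'),
    int_mul_exp (-l1) 0 t (neg_ne_zero.mpr hl1'),
    int_exp_lin l2 (-Λ*t) 0 t hl2']
  have hE : Real.exp ((-Λ*t) + l2*t) = Real.exp (-l1*t) := by
    congr 1; simp only [hΛdef]; ring
  rw [hE]
  simp only [hBdef, hA2def, hΛdef]
  have h0 : Real.exp ((0:ℝ) + (-l1)*0) = 1 := by norm_num
  have h0' : Real.exp ((-l1)*(0:ℝ)) = 1 := by norm_num
  have h0'' : Real.exp ((0:ℝ) + (-l1)*t) = Real.exp (-l1*t) := by norm_num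
  rw [h0, h0', h0'']
  have h0''' : Real.exp (-(l1+l2)*t + l2*0) = Real.exp (-(l1+l2)*t) := by norm_num
  rw [h0''']
  field_simp [hl1', hl2', hΛ]
  ring

/-- The explicit relative entropy functions `H₁, H₂` of the two-state
constant-parameter regime-switching model solve the Volterra system of integral
equations with exponential kernels of rates `λ₁*, λ₂*`. -/
theorem stmt2 (l1 l2 b1 b2 : ℝ) (hl1 : 0 < l1) (hl2 : 0 < l2)
    (Λ B A1 A2 : ℝ) (H1 H2 : ℝ → ℝ)
    (hΛ : Λ = l1 + l2)
    (hB : B = (l2 * b1 + l1 * b2) / Λ)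
    (hA1 : A1 = l1 * (b1 - b2) / Λ ^ 2)
    (hA2 : A2 = l2 * (b2 - b1) / Λ ^ 2)
    (hH1 : ∀ t, H1 t = B * t + A1 * (1 - Real.exp (-Λ * t)))
    (hH2 : ∀ t, H2 t = B * t + A2 * (1 - Real.exp (-Λ * t))) :
    ∀ t, 0 ≤ t →
      (H1 t = (b1 / l1) * (1 - Real.exp (-l1 * t))
          + ∫ u in (0:ℝ)..t, H2 (t - u) * (l1 * Real.exp (-l1 * u))) ∧
      (H2 t = (b2 / l2) * (1 - Real.exp (-l2 * t))
          + ∫ u in (0:ℝ)..t, H1 (t - u) * (l2 * Real.exp (-l2 * u))) := by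
  intro t ht
  subst hΛ hB hA1 hA2
  constructor
  · simp only [hH1, hH2]
    exact key l1 l2 b1 b2 t hl1 hl2
  · simp only [hH1, hH2]
    have h := key l2 l1 b2 b1 t hl2 hl1
    rw [add_comm l2 l1, add_comm (l1*b2) (l2*b1)] at h
    exact h
end

section
/- For real parameters λ₀ > 0, α > 0, C ∈ ℝ, let λ* > 0 be the unique solution of C²·(λ* − α) + log(λ*/λ₀) = 0. Then min(λ₀, α) ≤ λ* ≤ max(λ₀, α), i.e. the minimizer λ* always lies between λ₀ and α. -/
/-- The unique solution `λ* > 0` of `C²(λ* − α) + log(λ*/λ₀) = 0` always lies between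
the original intensity `λ₀` and the pure jump-telegraph martingale intensity `α`. -/
theorem stmt9 (l0 α C : ℝ) (hl0 : 0 < l0) (hα : 0 < α)
    (lstar : ℝ) (hlstar : 0 < lstar)
    (hcrit : C ^ 2 * (lstar - α) + Real.log (lstar / l0) = 0) :
    min l0 α ≤ lstar ∧ lstar ≤ max l0 α := by
  constructor
  · by_contra h
    push_neg at h
    have h1 : lstar < l0 := lt_of_lt_of_le h (min_le_left _ _)
    have h2 : lstar < α := lt_of_lt_of_le h (min_le_right _ _)
    have hlog : Real.log (lstar / l0) < 0 :=
      Real.log_neg (div_pos hlstar hl0) ((div_lt_one hl0).2 h1)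
    have ht : C ^ 2 * (lstar - α) ≤ 0 :=
      mul_nonpos_of_nonneg_of_nonpos (sq_nonneg C) (by linarith)
    linarith
  · by_contra h
    push_neg at h
    have h1 : l0 < lstar := lt_of_le_of_lt (le_max_left _ _) h
    have h2 : α < lstar := lt_of_le_of_lt (le_max_right _ _) h
    have hlog : 0 < Real.log (lstar / l0) :=
      Real.log_pos ((one_lt_div hl0).2 h1)
    have ht : 0 ≤ C ^ 2 * (lstar - α) :=
      mul_nonneg (sq_nonneg C) (by linarith)
    linarith
end

section
/- For real parameters λ₀ > 0, α ∈ ℝ, C ∈ ℝ, define b(λ) = λ₀ − λ + λ·log(λ/λ₀) + (C²/2)·(λ − α)² and b'(λ) = C²·(λ − α) + log(λ/λ₀) for λ > 0. Fix λ₂ > 0 and k ∈ ℝ. Then the function Φ(λ₁) = (λ₁ + λ₂)·b'(λ₁) + k − b(λ₁) is strictly increasing on (0,∞), tends to −∞ as λ₁ → 0⁺ and to +∞ as λ₁ → ∞; consequently Φ has a unique zero in (0,∞). -/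
open Filter Topology

/-- The first component `Φ(λ₁) = (λ₁ + λ₂) b'(λ₁) + k − b(λ₁)` of the critical-point
system of the long-term minimal entropy problem is strictly increasing on `(0, ∞)`,
tends to `−∞` at `0⁺` and to `+∞` at `+∞`; hence it has a unique zero in `(0, ∞)`. -/
theorem stmt10 (l0 α C : ℝ) (hl0 : 0 < l0) (l2 k : ℝ) (hl2 : 0 < l2)
    (b b' Φ : ℝ → ℝ)
    (hb : ∀ l, b l = l0 - l + l * Real.log (l / l0) + C ^ 2 / 2 * (l - α) ^ 2)
    (hb' : ∀ l, b' l = C ^ 2 * (l - α) + Real.log (l / l0))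
    (hΦ : ∀ l, Φ l = (l + l2) * b' l + k - b l) :
    StrictMonoOn Φ (Set.Ioi (0:ℝ)) ∧
    Tendsto Φ (𝓝[>] (0:ℝ)) atBot ∧
    Tendsto Φ atTop atTop ∧
    (∃! l : ℝ, 0 < l ∧ Φ l = 0) := by
  set F : ℝ → ℝ := fun l =>
    C ^ 2 * ((l - α) * (l + l2) - (l - α) ^ 2 / 2)
      + l2 * (Real.log l - Real.log l0) + l + (k - l0) with hFdef
  have hΦeq : ∀ l ∈ Set.Ioi (0:ℝ), Φ l = F l := by
    intro l hl
    have hl' : (0:ℝ) < l := hl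
    rw [hΦ, hb, hb', Real.log_div (ne_of_gt hl') (ne_of_gt hl0), hFdef]
    ring
  -- derivative of F
  have hF : ∀ x : ℝ, x ≠ 0 → HasDerivAt F (C ^ 2 * (x + l2) + l2 * x⁻¹ + 1) x := by
    intro x hx
    have h1 : HasDerivAt (fun l : ℝ => (l - α) * (l + l2) - (l - α) ^ 2 / 2)
        (x + l2) x := by
      have := (((hasDerivAt_id' x).sub_const α).mul ((hasDerivAt_id' x).add_const l2)).sub
        ((((hasDerivAt_id' x).sub_const α).pow 2).div_const 2)
      exact this.congr_deriv (by push_cast; ring)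
    have h2 : HasDerivAt (fun l : ℝ => Real.log l - Real.log l0) x⁻¹ x :=
      (Real.hasDerivAt_log hx).sub_const _
    have h3 := (((h1.const_mul (C ^ 2)).add (h2.const_mul l2)).add
      (hasDerivAt_id' x)).add_const (k - l0)
    exact h3
  have hFcont : ContinuousOn F (Set.Ioi (0:ℝ)) := fun x hx =>
    (hF x (ne_of_gt hx)).differentiableAt.continuousAt.continuousWithinAt
  -- strict monotonicity of F
  have hSM : StrictMonoOn F (Set.Ioi (0:ℝ)) := by
    apply strictMonoOn_of_deriv_pos (convex_Ioi 0) hFcont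
    intro x hx
    rw [interior_Ioi] at hx
    rw [(hF x (ne_of_gt hx)).deriv]
    have hx' : (0:ℝ) < x := hx
    positivity
  -- tendsto at 0+
  have hbotF : Tendsto F (𝓝[>] (0:ℝ)) atBot := by
    have hG : Tendsto (fun l : ℝ =>
        C ^ 2 * ((l - α) * (l + l2) - (l - α) ^ 2 / 2) - l2 * Real.log l0 + l + (k - l0))
        (𝓝[>] (0:ℝ)) (𝓝 (C ^ 2 * ((0 - α) * (0 + l2) - (0 - α) ^ 2 / 2)
          - l2 * Real.log l0 + 0 + (k - l0))) := by
      exact (Continuous.tendsto (by continuity) 0).mono_left nhdsWithin_le_nhds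
    have hlog : Tendsto (fun l : ℝ => l2 * Real.log l) (𝓝[>] (0:ℝ)) atBot :=
      Real.tendsto_log_nhdsGT_zero.const_mul_atBot hl2
    have := hG.add_atBot hlog
    refine this.congr fun l => ?_
    simp only [hFdef]
    ring
  -- tendsto at +∞
  have htopF : Tendsto F atTop atTop := by
    have hg : Tendsto (fun l : ℝ => l2 * Real.log l + l + (k - l0 - l2 * Real.log l0))
        atTop atTop := by
      exact tendsto_atTop_add_const_right _ _
        (Filter.Tendsto.atTop_add_atTop (Real.tendsto_log_atTop.const_mul_atTop hl2) tendsto_id)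
    apply tendsto_atTop_mono' atTop _ hg
    filter_upwards [eventually_ge_atTop (|α|)] with l hl
    have h1 : α ≤ l := le_trans (le_abs_self α) hl
    have h2 : -α ≤ l := le_trans (neg_le_abs α) hl
    have hq : 0 ≤ (l - α) * (l + l2) - (l - α) ^ 2 / 2 := by nlinarith
    have : 0 ≤ C ^ 2 * ((l - α) * (l + l2) - (l - α) ^ 2 / 2) :=
      mul_nonneg (sq_nonneg C) hq
    simp only [hFdef]
    nlinarith
  -- transfer to Φ
  have hSMΦ : StrictMonoOn Φ (Set.Ioi (0:ℝ)) := by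
    intro a ha b' hb' hab
    rw [hΦeq a ha, hΦeq b' hb']
    exact hSM ha hb' hab
  have hbotΦ : Tendsto Φ (𝓝[>] (0:ℝ)) atBot := by
    refine hbotF.congr' ?_
    filter_upwards [self_mem_nhdsWithin] with l hl
    exact (hΦeq l hl).symm
  have htopΦ : Tendsto Φ atTop atTop := by
    refine htopF.congr' ?_
    filter_upwards [eventually_gt_atTop 0] with l hl
    exact (hΦeq l hl).symm
  refine ⟨hSMΦ, hbotΦ, htopΦ, ?_⟩
  -- existence of a zero
  obtain ⟨a, haneg, hapos⟩ : ∃ a, Φ a < 0 ∧ a ∈ Set.Ioi (0:ℝ) :=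
    ((hbotΦ.eventually (eventually_lt_atBot 0)).and eventually_mem_nhdsWithin).exists
  obtain ⟨c, hcpos, hca⟩ : ∃ c, 0 < Φ c ∧ a ≤ c :=
    ((htopΦ.eventually (eventually_gt_atTop 0)).and (eventually_ge_atTop a)).exists
  have hsub : Set.Icc a c ⊆ Set.Ioi (0:ℝ) := fun x hx => lt_of_lt_of_le hapos hx.1
  have hcontΦ : ContinuousOn Φ (Set.Icc a c) :=
    ((hFcont.mono hsub).congr (fun x hx => hΦeq x (hsub hx)))
  have h0mem : (0:ℝ) ∈ Set.Icc (Φ a) (Φ c) := ⟨le_of_lt haneg, le_of_lt hcpos⟩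
  obtain ⟨l, hlmem, hlzero⟩ := intermediate_value_Icc hca hcontΦ h0mem
  have hlpos : 0 < l := hsub hlmem
  refine ⟨l, ⟨hlpos, hlzero⟩, ?_⟩
  intro y hy
  exact hSMΦ.injOn hy.1 hlpos (by rw [hy.2, hlzero])
end

section
/- Let λ₀ > 0, α ∈ ℝ, C ≠ 0, define b(λ) = λ₀ − λ + λ·log(λ/λ₀) + (C²/2)·(λ − α)² for λ > 0, and let λ* > 0 be its unique global minimizer (the unique solution of C²·(λ* − α) + log(λ*/λ₀) = 0). For λ₁, λ₂ > 0 set Λ = λ₁ + λ₂, B(λ₁,λ₂) = (λ₂·b(λ₁) + λ₁·b(λ₂))/Λ, A₁(λ₁,λ₂) = λ₁·(b(λ₁) − b(λ₂))/Λ², A₂(λ₁,λ₂) = λ₂·(b(λ₂) − b(λ₁))/Λ², and for t > 0 define H₁(t; λ₁, λ₂) = B·t + A₁·(1 − e^{−Λt}) and H₂(t; λ₁, λ₂) = B·t + A₂·(1 − e^{−Λt}). Then for every t > 0 and all λ₁, λ₂ > 0 one has Hᵢ(t; λ₁, λ₂) ≥ b(λ*)·t for i = 1, 2, with equality if and only if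 λ₁ = λ₂ = λ*. In particular, for each fixed t > 0 the functions (λ₁, λ₂) ↦ Hᵢ(t; λ₁, λ₂) attain their minimum on (0,∞)² at the unique point (λ*, λ*), which does not depend on t. -/
/-- Symmetric case of the minimal entropy martingale measure problem: with a common
entropy rate `b` and its unique minimizer `λ*` on `(0, ∞)`, for every horizon `t > 0`
the relative entropy functions satisfy `Hᵢ(t; λ₁, λ₂) ≥ b(λ*) t`, with equality iff
`λ₁ = λ₂ = λ*`; so the minimizer `(λ*, λ*)` is unique and does not depend on `t`. -/
theorem stmt15 (l0 α C : ℝ) (hl0 : 0 < l0) (hC : C ≠ 0)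
    (b : ℝ → ℝ)
    (hb : ∀ l, b l = l0 - l + l * Real.log (l / l0) + C ^ 2 / 2 * (l - α) ^ 2)
    (lstar : ℝ) (hlstar : 0 < lstar)
    (hcrit : C ^ 2 * (lstar - α) + Real.log (lstar / l0) = 0)
    (B A1 A2 : ℝ → ℝ → ℝ) (H1 H2 : ℝ → ℝ → ℝ → ℝ)
    (hB : ∀ l1 l2, B l1 l2 = (l2 * b l1 + l1 * b l2) / (l1 + l2))
    (hA1 : ∀ l1 l2, A1 l1 l2 = l1 * (b l1 - b l2) / (l1 + l2) ^ 2)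
    (hA2 : ∀ l1 l2, A2 l1 l2 = l2 * (b l2 - b l1) / (l1 + l2) ^ 2)
    (hH1 : ∀ t l1 l2, H1 t l1 l2
      = B l1 l2 * t + A1 l1 l2 * (1 - Real.exp (-(l1 + l2) * t)))
    (hH2 : ∀ t l1 l2, H2 t l1 l2
      = B l1 l2 * t + A2 l1 l2 * (1 - Real.exp (-(l1 + l2) * t))) :
    ∀ t, 0 < t → ∀ l1, 0 < l1 → ∀ l2, 0 < l2 →
      (b lstar * t ≤ H1 t l1 l2 ∧ b lstar * t ≤ H2 t l1 l2) ∧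
      (H1 t l1 l2 = b lstar * t ↔ l1 = lstar ∧ l2 = lstar) ∧
      (H2 t l1 l2 = b lstar * t ↔ l1 = lstar ∧ l2 = lstar) := by
  have hC2 : 0 < C ^ 2 := by positivity
  have hlogstar : Real.log lstar - Real.log l0 = -(C ^ 2 * (lstar - α)) := by
    rw [Real.log_div (ne_of_gt hlstar) (ne_of_gt hl0)] at hcrit
    linarith
  -- b has a unique minimum at lstar on (0, ∞)
  have bmin : ∀ l, 0 < l → b lstar ≤ b l ∧ (b l = b lstar ↔ l = lstar) := by
    intro l hl
    have hdiff : b l - b lstar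
        = (lstar - l) + l * (Real.log l - Real.log lstar)
          + C ^ 2 / 2 * (l - lstar) ^ 2 := by
      rw [hb l, hb lstar, Real.log_div (ne_of_gt hl) (ne_of_gt hl0),
        Real.log_div (ne_of_gt hlstar) (ne_of_gt hl0)]
      linear_combination (l - lstar) * hlogstar
    have hlogineq : l - lstar ≤ l * (Real.log l - Real.log lstar) := by
      have h := Real.log_le_sub_one_of_pos (div_pos hlstar hl)
      rw [Real.log_div (ne_of_gt hlstar) (ne_of_gt hl)] at h
      have hdl : lstar / l - 1 = (lstar - l) / l := by field_simp
      rw [hdl] at h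
      have h2 := mul_le_mul_of_nonneg_left h hl.le
      rw [mul_div_cancel₀ _ (ne_of_gt hl)] at h2
      nlinarith
    constructor
    · nlinarith [sq_nonneg (l - lstar)]
    constructor
    · intro heq
      by_contra hne
      have hne' : l - lstar ≠ 0 := sub_ne_zero.mpr hne
      have hsq : 0 < (l - lstar) ^ 2 := by positivity
      nlinarith
    · intro h; rw [h]
  intro t ht l1 h1 l2 h2
  obtain ⟨hd1, hiff1⟩ := bmin l1 h1
  obtain ⟨hd2, hiff2⟩ := bmin l2 h2
  have hΛ : 0 < l1 + l2 := by linarith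
  have hΛ2 : 0 < (l1 + l2) ^ 2 := by positivity
  obtain ⟨E, hE⟩ : ∃ E, Real.exp (-(l1 + l2) * t) = E := ⟨_, rfl⟩
  have hE0 : 0 < E := hE ▸ Real.exp_pos _
  have hE1 : E < 1 := by
    rw [← hE]
    apply Real.exp_lt_one_iff.mpr; nlinarith
  have hE2 : -(l1 + l2) * t + 1 < E := by
    have := Real.add_one_lt_exp (x := -(l1 + l2) * t) (by nlinarith)
    rw [hE] at this
    linarith
  have hw : 0 < (l1 + l2) * t - (1 - E) := by nlinarith
  have hw1 : 0 < (l1 + l2) * l2 * t + l1 * (1 - E) := by nlinarith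
  have hw2 : 0 < (l1 + l2) * l1 * t + l2 * (1 - E) := by nlinarith
  have key1 : (l1 + l2) ^ 2 * (H1 t l1 l2 - b lstar * t)
      = (b l1 - b lstar) * ((l1 + l2) * l2 * t + l1 * (1 - E))
        + (b l2 - b lstar) * (l1 * ((l1 + l2) * t - (1 - E))) := by
    rw [hH1 t l1 l2, hB, hA1, hE]
    field_simp
    ring
  have key2 : (l1 + l2) ^ 2 * (H2 t l1 l2 - b lstar * t)
      = (b l2 - b lstar) * ((l1 + l2) * l1 * t + l2 * (1 - E))
        + (b l1 - b lstar) * (l2 * ((l1 + l2) * t - (1 - E))) := by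
    rw [hH2 t l1 l2, hB, hA2, hE]
    field_simp
    ring
  have hm1 : 0 < l1 * ((l1 + l2) * t - (1 - E)) := by positivity
  have hm2 : 0 < l2 * ((l1 + l2) * t - (1 - E)) := by positivity
  refine ⟨⟨?_, ?_⟩, ⟨?_, ?_⟩, ⟨?_, ?_⟩⟩
  · have h : 0 ≤ (l1 + l2) ^ 2 * (H1 t l1 l2 - b lstar * t) := by
      rw [key1]
      have p1 := mul_nonneg (by linarith : (0:ℝ) ≤ b l1 - b lstar) hw1.le
      have p2 := mul_nonneg (by linarith : (0:ℝ) ≤ b l2 - b lstar) hm1.le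
      linarith
    have := (mul_nonneg_iff_of_pos_left hΛ2).mp h
    linarith
  · have h : 0 ≤ (l1 + l2) ^ 2 * (H2 t l1 l2 - b lstar * t) := by
      rw [key2]
      have p1 := mul_nonneg (by linarith : (0:ℝ) ≤ b l2 - b lstar) hw2.le
      have p2 := mul_nonneg (by linarith : (0:ℝ) ≤ b l1 - b lstar) hm2.le
      linarith
    have := (mul_nonneg_iff_of_pos_left hΛ2).mp h
    linarith
  · intro h
    rw [h, sub_self, mul_zero] at key1
    have e1 : b l1 = b lstar := by
      by_contra hne
      have hd1' : 0 < b l1 - b lstar :=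
        lt_of_le_of_ne (by linarith) (fun hc => hne (by linarith))
      have p1 := mul_pos hd1' hw1
      have p2 := mul_nonneg (by linarith : (0:ℝ) ≤ b l2 - b lstar) hm1.le
      linarith
    have e2 : b l2 = b lstar := by
      by_contra hne
      have hd2' : 0 < b l2 - b lstar :=
        lt_of_le_of_ne (by linarith) (fun hc => hne (by linarith))
      have p1 := mul_pos hd2' hm1
      have p2 := mul_nonneg (by linarith : (0:ℝ) ≤ b l1 - b lstar) hw1.le
      linarith
    exact ⟨hiff1.mp e1, hiff2.mp e2⟩
  · rintro ⟨e1, e2⟩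
    have hb1 : b l1 - b lstar = 0 := by rw [e1, sub_self]
    have hb2 : b l2 - b lstar = 0 := by rw [e2, sub_self]
    rw [hb1, hb2, zero_mul, zero_mul, add_zero] at key1
    rcases mul_eq_zero.mp key1 with h | h
    · exact absurd h (ne_of_gt hΛ2)
    · linarith
  · intro h
    rw [h, sub_self, mul_zero] at key2
    have e2 : b l2 = b lstar := by
      by_contra hne
      have hd2' : 0 < b l2 - b lstar :=
        lt_of_le_of_ne (by linarith) (fun hc => hne (by linarith))
      have p1 := mul_pos hd2' hw2
      have p2 := mul_nonneg (by linarith : (0:ℝ) ≤ b l1 - b lstar) hm2.le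
      linarith
    have e1 : b l1 = b lstar := by
      by_contra hne
      have hd1' : 0 < b l1 - b lstar :=
        lt_of_le_of_ne (by linarith) (fun hc => hne (by linarith))
      have p1 := mul_pos hd1' hm2
      have p2 := mul_nonneg (by linarith : (0:ℝ) ≤ b l2 - b lstar) hw2.le
      linarith
    exact ⟨hiff1.mp e1, hiff2.mp e2⟩
  · rintro ⟨e1, e2⟩
    have hb1 : b l1 - b lstar = 0 := by rw [e1, sub_self]
    have hb2 : b l2 - b lstar = 0 := by rw [e2, sub_self]
    rw [hb1, hb2, zero_mul, zero_mul, add_zero] at key2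
    rcases mul_eq_zero.mp key2 with h | h
    · exact absurd h (ne_of_gt hΛ2)
    · linarith
end
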